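/- arXiv:1007.2896 — 2 statements merged into one kernel-verified Lean document; each statement's English description precedes it below -/
import Mathlib

section
/- Let I be a type, and for each i : I let L i and R i be the left and right creation operators on ℓ²(List I, ℂ) (so L i (E w) = E (i :: w) and R i (E w) = E (w ++ [i]) for all words w). Let Toep be the topological closure of the unital star subalgebra of bounded operators on ℓ²(List I, ℂ) generated by {L i : i ∈ I}, and Toepᴿ the topological closure of the unital star subalgebra generated by {R i : i ∈ I}. Then there exists a bijective complex-linear isometry Φ : Toep → Toepᴿ which is anti-multiplicative (Φ(A·B) = Φ(B)·Φ(A) for all A, B ∈ Toep), star-preserving (Φ(A†) = Φ(A)† for all A ∈ Toep), unital (Φ(1) = 1), and satisfies Φ(L i) = (R i)† for every i : I. In other words, the Toeplitz algebra Toep and the right Toeplitz algebra Toepᴿ are anti-*-isomorphic. -/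
open scoped ENNReal

/-- The Hilbert space `ℓ²(List I, ℂ)` of square-summable families indexed by words. -/
noncomputable abbrev FockSpace (I : Type*) := lp (fun _ : List I => ℂ) 2

/-- The standard basis vector of `ℓ²(List I, ℂ)` at the word `w`. -/
noncomputable def E {I : Type*} (w : List I) : FockSpace I :=
  letI : DecidableEq (List I) := Classical.decEq _
  lp.single 2 w 1

namespace ToepAux

variable {I : Type*}

lemma two_toReal_pos : 0 < (2 : ℝ≥0∞).toReal := by norm_num

/-- Reversal of words as an equivalence. -/
def revE (I : Type*) : List I ≃ List I :=
  ⟨List.reverse, List.reverse, List.reverse_reverse, List.reverse_reverse⟩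

lemma memW (f : FockSpace I) : Memℓp (fun w : List I => star (f w.reverse)) 2 := by
  apply memℓp_gen
  have h := (lp.memℓp f).summable two_toReal_pos
  have h2 := ((revE I).summable_iff
    (f := fun w : List I => ‖f w‖ ^ (2 : ℝ≥0∞).toReal)).2 h
  simpa [revE, Function.comp_def] using h2

/-- The antiunitary `W : f ↦ (w ↦ star (f (w.reverse)))`. -/
noncomputable def W : FockSpace I ≃ₗᵢ⋆[ℂ] FockSpace I where
  toFun f := ⟨fun w => star (f w.reverse), memW f⟩
  invFun f := ⟨fun w => star (f w.reverse), memW f⟩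
  map_add' f g := by
    apply lp.ext; funext w
    simp only [lp.coeFn_add, Pi.add_apply, star_add]
  map_smul' c f := by
    apply lp.ext; funext w
    simp [lp.coeFn_smul, mul_comm]
  left_inv f := by
    apply lp.ext; funext w
    simp
  right_inv f := by
    apply lp.ext; funext w
    simp
  norm_map' f := by
    rw [lp.norm_eq_tsum_rpow two_toReal_pos, lp.norm_eq_tsum_rpow two_toReal_pos]
    congr 1
    rw [← Equiv.tsum_eq (revE I) (fun w : List I => ‖f w‖ ^ (2 : ℝ≥0∞).toReal)]
    exact tsum_congr fun w => by simp [revE]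

@[simp] lemma W_apply (f : FockSpace I) (w : List I) :
    (W f : ∀ _ : List I, ℂ) w = star (f w.reverse) := rfl

@[simp] lemma W_W (f : FockSpace I) : W (W f : FockSpace I) = f := by
  apply lp.ext; funext w
  simp

lemma E_eq [inst : DecidableEq (List I)] (w : List I) :
    E (I := I) w = lp.single 2 w (1 : ℂ) := by
  rw [Subsingleton.elim inst (Classical.decEq (List I))]
  rfl

lemma E_apply [DecidableEq (List I)] (w v : List I) :
    (E w : lp (fun _ : List I => ℂ) 2) v = if v = w then 1 else 0 := by
  rw [E_eq]
  by_cases h : v = w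
  · subst h; rw [if_pos rfl]
    exact lp.single_apply_self (E := fun _ : List I => ℂ) 2 v 1
  · rw [if_neg h]
    exact lp.single_apply_ne (E := fun _ : List I => ℂ) 2 w 1 h

lemma W_E (w : List I) : W (E w) = E w.reverse := by
  classical
  apply lp.ext; funext v
  rw [show (W (E w) : ∀ _ : List I, ℂ) v = star ((E w : ∀ _ : List I, ℂ) v.reverse) from rfl]
  rw [E_apply, E_apply]
  by_cases h : v = w.reverse
  · subst h; simp
  · have h' : v.reverse ≠ w := fun hc => h (by rw [← hc, List.reverse_reverse])
    simp [h, h']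

local notation "⟪" x ", " y "⟫" => @inner ℂ _ _ x y

lemma inner_W (u v : FockSpace I) : ⟪(W u : FockSpace I), v⟫ = ⟪(W v : FockSpace I), u⟫ := by
  rw [lp.inner_eq_tsum, lp.inner_eq_tsum]
  rw [← Equiv.tsum_eq (revE I) (fun w : List I => ⟪(W v : FockSpace I) w, u w⟫)]
  refine tsum_congr fun w => ?_
  simp only [RCLike.inner_apply, W_apply, revE, Equiv.coe_fn_mk, List.reverse_reverse,
    starRingEnd_apply, star_star]
  ring

lemma inner_W' (u v : FockSpace I) : ⟪u, (W v : FockSpace I)⟫ = ⟪v, (W u : FockSpace I)⟫ := by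
  rw [← inner_conj_symm, inner_W, inner_conj_symm]

/-- Conjugation by `W` on operators.  This is conjugate-linear and multiplicative. -/
noncomputable def conjW (A : FockSpace I →L[ℂ] FockSpace I) :
    FockSpace I →L[ℂ] FockSpace I :=
  LinearMap.mkContinuous
    { toFun := fun x => W (A (W x))
      map_add' := fun x y => by simp [map_add]
      map_smul' := fun c x => by
        rw [LinearIsometryEquiv.map_smulₛₗ, map_smul, LinearIsometryEquiv.map_smulₛₗ]
        simp }
    ‖A‖ (fun x => by
      calc ‖W (A (W x) : FockSpace I)‖ = ‖A (W x)‖ := W.norm_map _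
        _ ≤ ‖A‖ * ‖(W x : FockSpace I)‖ := A.le_opNorm _
        _ = ‖A‖ * ‖x‖ := by rw [W.norm_map])

@[simp] lemma conjW_apply (A : FockSpace I →L[ℂ] FockSpace I) (x : FockSpace I) :
    conjW A x = W (A (W x)) := rfl

lemma conjW_conjW (A : FockSpace I →L[ℂ] FockSpace I) : conjW (conjW A) = A := by
  ext x; simp

lemma conjW_mul (A B : FockSpace I →L[ℂ] FockSpace I) :
    conjW (A * B) = conjW A * conjW B := by
  ext x; simp [ContinuousLinearMap.mul_apply]

lemma conjW_one : conjW (1 : FockSpace I →L[ℂ] FockSpace I) = 1 := by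
  ext x; simp

lemma conjW_add (A B : FockSpace I →L[ℂ] FockSpace I) :
    conjW (A + B) = conjW A + conjW B := by
  ext x; simp

lemma conjW_smul (c : ℂ) (A : FockSpace I →L[ℂ] FockSpace I) :
    conjW (c • A) = (starRingEnd ℂ c) • conjW A := by
  ext x
  simp [LinearIsometryEquiv.map_smulₛₗ]

lemma conjW_norm (A : FockSpace I →L[ℂ] FockSpace I) : ‖conjW A‖ = ‖A‖ := by
  have key : ∀ B : FockSpace I →L[ℂ] FockSpace I, ‖conjW B‖ ≤ ‖B‖ := fun B => by
    refine ContinuousLinearMap.opNorm_le_bound _ (norm_nonneg B) fun x => ?_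
    calc ‖conjW B x‖ = ‖B (W x)‖ := W.norm_map _
      _ ≤ ‖B‖ * ‖(W x : FockSpace I)‖ := B.le_opNorm _
      _ = ‖B‖ * ‖x‖ := by rw [W.norm_map]
  refine le_antisymm (key A) ?_
  conv_lhs => rw [← conjW_conjW A]
  exact key _

lemma conjW_adjoint (A : FockSpace I →L[ℂ] FockSpace I) :
    ContinuousLinearMap.adjoint (conjW A) = conjW (ContinuousLinearMap.adjoint A) := by
  refine ((ContinuousLinearMap.eq_adjoint_iff _ _).2 fun x y => ?_).symm
  rw [conjW_apply, conjW_apply, inner_W, ContinuousLinearMap.adjoint_inner_right, inner_W']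

/-- The anti-∗-automorphism `A ↦ W A† W` of `B(ℓ²)`. -/
noncomputable def phi (A : FockSpace I →L[ℂ] FockSpace I) :
    FockSpace I →L[ℂ] FockSpace I :=
  conjW (ContinuousLinearMap.adjoint A)

lemma phi_norm (A : FockSpace I →L[ℂ] FockSpace I) : ‖phi A‖ = ‖A‖ := by
  rw [phi, conjW_norm]
  exact ContinuousLinearMap.adjoint.norm_map A

lemma phi_add (A B : FockSpace I →L[ℂ] FockSpace I) : phi (A + B) = phi A + phi B := by
  rw [phi, map_add, conjW_add]; rfl

lemma phi_smul (c : ℂ) (A : FockSpace I →L[ℂ] FockSpace I) : phi (c • A) = c • phi A := by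
  rw [phi, LinearIsometryEquiv.map_smulₛₗ, conjW_smul]
  simp [phi]

lemma phi_mul (A B : FockSpace I →L[ℂ] FockSpace I) : phi (A * B) = phi B * phi A := by
  rw [phi, ContinuousLinearMap.mul_def, ContinuousLinearMap.adjoint_comp,
    ← ContinuousLinearMap.mul_def, conjW_mul]
  rfl

lemma phi_one : phi (1 : FockSpace I →L[ℂ] FockSpace I) = 1 := by
  rw [phi, ← ContinuousLinearMap.star_eq_adjoint, star_one, conjW_one]

lemma phi_star (A : FockSpace I →L[ℂ] FockSpace I) : phi (star A) = star (phi A) := by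
  rw [phi, ContinuousLinearMap.star_eq_adjoint, ContinuousLinearMap.adjoint_adjoint,
    ContinuousLinearMap.star_eq_adjoint, phi, conjW_adjoint,
    ContinuousLinearMap.adjoint_adjoint]

lemma phi_phi (A : FockSpace I →L[ℂ] FockSpace I) : phi (phi A) = A := by
  rw [phi, phi, conjW_adjoint, ContinuousLinearMap.adjoint_adjoint, conjW_conjW]

lemma phi_algebraMap (c : ℂ) :
    phi (algebraMap ℂ (FockSpace I →L[ℂ] FockSpace I) c)
      = algebraMap ℂ (FockSpace I →L[ℂ] FockSpace I) c := by
  rw [Algebra.algebraMap_eq_smul_one, phi_smul, phi_one]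

lemma ext_E {A B : FockSpace I →L[ℂ] FockSpace I}
    (h : ∀ w : List I, A (E w) = B (E w)) : A = B := by
  letI : DecidableEq (List I) := Classical.decEq _
  refine ContinuousLinearMap.ext fun f => ?_
  have hs := lp.hasSum_single (E := fun _ : List I => ℂ) (p := 2) (by norm_num) f
  have hA := hs.mapL A
  have hB := hs.mapL B
  refine hA.unique ?_
  have he : ∀ w : List I, A (lp.single 2 w (f w)) = B (lp.single 2 w (f w)) := by
    intro w
    have h1 : lp.single 2 w (f w) = f w • E w := by
      rw [E_eq, ← lp.single_smul, smul_eq_mul, mul_one]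
    rw [h1, map_smul, map_smul, h]
  simpa only [he] using hB

lemma isometry_phi : Isometry (phi (I := I)) :=
  AddMonoidHomClass.isometry_of_norm (AddMonoidHom.mk' (phi (I := I)) phi_add) phi_norm

lemma mem_map_adjoin {L R : I → (FockSpace I →L[ℂ] FockSpace I)}
    (hLR : ∀ i, phi (L i) = star (R i)) :
    ∀ x ∈ StarAlgebra.adjoin ℂ (Set.range L),
      phi x ∈ StarAlgebra.adjoin ℂ (Set.range R) := by
  intro x hx
  induction hx using StarAlgebra.adjoin_induction with
  | mem x h =>
      obtain ⟨i, rfl⟩ := h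
      rw [hLR]
      exact star_mem (StarAlgebra.subset_adjoin ℂ _ ⟨i, rfl⟩)
  | algebraMap r => rw [phi_algebraMap]; exact algebraMap_mem _ r
  | add x y hx hy ihx ihy => rw [phi_add]; exact add_mem ihx ihy
  | mul x y hx hy ihx ihy => rw [phi_mul]; exact mul_mem ihy ihx
  | star x hx ih => rw [phi_star]; exact star_mem ih

lemma mem_map_closure {S T : StarSubalgebra ℂ (FockSpace I →L[ℂ] FockSpace I)}
    (h : ∀ x ∈ S, phi x ∈ T) :
    ∀ x ∈ S.topologicalClosure, phi x ∈ T.topologicalClosure := by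
  intro x hx
  have h1 : phi x ∈ closure (phi (I := I) '' (S : Set _)) :=
    image_closure_subset_closure_image isometry_phi.continuous ⟨x, hx, rfl⟩
  have h2 : closure (phi (I := I) '' (S : Set _)) ⊆ closure (T : Set _) :=
    closure_mono (fun y ⟨z, hz, hzy⟩ => hzy ▸ h z hz)
  exact h2 h1

end ToepAux

open ToepAux

set_option maxHeartbeats 1000000 in
/-- Let `L i` and `R i` be the left and right creation operators on
`ℓ²(List I, ℂ)`.  Let `Toep` be the C*-algebra generated by the `L i` (the closure of
the unital star subalgebra they generate) and `Toepᴿ` the C*-algebra generated by the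
`R i`.  Then there is a bijective linear isometry `Φ : Toep → Toepᴿ` which is
anti-multiplicative, star-preserving, unital, and sends each `L i` to `(R i)†`:
the Toeplitz algebra and the right Toeplitz algebra are anti-*-isomorphic. -/
theorem toeplitz_anti_star_isomorphic {I : Type*}
    (L R : I → (FockSpace I →L[ℂ] FockSpace I))
    (hL : ∀ i, ∀ w : List I, L i (E w) = E (i :: w))
    (hR : ∀ i, ∀ w : List I, R i (E w) = E (w ++ [i]))
    (Toep ToepR : StarSubalgebra ℂ (FockSpace I →L[ℂ] FockSpace I))
    (hToep : Toep = (StarAlgebra.adjoin ℂ (Set.range L)).topologicalClosure)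
    (hToepR : ToepR = (StarAlgebra.adjoin ℂ (Set.range R)).topologicalClosure)
    (hmem : ∀ i, L i ∈ Toep) :
    ∃ Φ : Toep ≃ₗᵢ[ℂ] ToepR,
      (∀ A B : Toep,
        ((Φ (A * B) : ToepR) : FockSpace I →L[ℂ] FockSpace I) = ↑(Φ B) * ↑(Φ A)) ∧
      (∀ A : Toep,
        ((Φ (star A) : ToepR) : FockSpace I →L[ℂ] FockSpace I) = star ↑(Φ A)) ∧
      ((Φ 1 : ToepR) : FockSpace I →L[ℂ] FockSpace I) = 1 ∧
      (∀ i, ((Φ ⟨L i, hmem i⟩ : ToepR) : FockSpace I →L[ℂ] FockSpace I) =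
        ContinuousLinearMap.adjoint (R i)) := by
  classical
  -- `W (L i) W = R i`, hence `phi (L i) = (R i)†`.
  have hconj : ∀ i, conjW (L i) = R i := by
    intro i
    refine ext_E fun w => ?_
    rw [conjW_apply, W_E, hL, W_E, hR]
    simp
  have hphiL : ∀ i, phi (L i) = star (R i) := by
    intro i
    rw [phi, ← conjW_adjoint, hconj, ContinuousLinearMap.star_eq_adjoint]
  have hphiR : ∀ i, phi (R i) = star (L i) := by
    intro i
    have h := congrArg phi (hphiL i)
    rw [phi_phi, phi_star] at h
    rw [h, star_star]
  have hfwd : ∀ x ∈ Toep, phi x ∈ ToepR := by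
    rw [hToep, hToepR]
    exact mem_map_closure (mem_map_adjoin hphiL)
  have hbwd : ∀ x ∈ ToepR, phi x ∈ Toep := by
    rw [hToep, hToepR]
    exact mem_map_closure (mem_map_adjoin hphiR)
  set_option synthInstance.maxHeartbeats 1000000 in
  refine ⟨{ toFun := fun a => ⟨phi a, hfwd a a.2⟩
            invFun := fun b => ⟨phi b, hbwd b b.2⟩
            map_add' := fun a b => Subtype.ext (by
              simpa using phi_add (a : FockSpace I →L[ℂ] FockSpace I) b)
            map_smul' := fun c a => Subtype.ext (by
              simpa using phi_smul c (a : FockSpace I →L[ℂ] FockSpace I))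
            left_inv := fun a => Subtype.ext (phi_phi _)
            right_inv := fun b => Subtype.ext (phi_phi _)
            norm_map' := fun a => phi_norm _ }, ?_, ?_, ?_, ?_⟩
  · intro A B
    exact phi_mul (A : FockSpace I →L[ℂ] FockSpace I) B
  · intro A
    exact phi_star (A : FockSpace I →L[ℂ] FockSpace I)
  · exact phi_one
  · intro i
    show phi (L i) = _
    rw [hphiL, ContinuousLinearMap.star_eq_adjoint]
end

section
/- Equip ℕ with the quiver structure having exactly one arrow from m to m+1 for each m : ℕ (Hom m n := PLift (n = m + 1)) and no other arrows; this is the 1-regular tree T₁. Then in the free groupoid on this quiver, any two parallel morphisms are equal: for all objects i, j of the free groupoid, the hom-set from i to j is a subsingleton. Equivalently, every element of the graph groupoid of T₁ connecting a vertex i to a vertex j is the unique reduced finite path between them, so the reduced finite path set of the shadowed graph of T₁ is the disjoint union of the finite path set of T₁ and that of its shadow T₁⁻¹. -/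
/-- The vertex set of the 1-regular tree `T₁`: the natural numbers. -/
def OneTree : Type := ℕ

/-- The quiver structure of the 1-regular tree: exactly one arrow from `m` to `m + 1`
for each `m : ℕ`, and no other arrows. -/
instance : Quiver OneTree := ⟨fun m n => PLift ((show ℕ from n) = (show ℕ from m) + 1)⟩

open CategoryTheory CategoryTheory.Groupoid Quiver.FreeGroupoid

/-- A vertex of the 1-regular tree coming from a natural number. -/
def vtx (n : ℕ) : OneTree := n

/-- A thin (codiscrete) groupoid on ℕ: exactly one morphism between any two objects. -/
def ThinN : Type := ℕ

instance : Groupoid ThinN where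
  Hom _ _ := Unit
  id _ := ⟨⟩
  comp _ _ := ⟨⟩
  inv _ := ⟨⟩

/-- The quiver map from `T₁` to the thin groupoid. -/
def phi : OneTree ⥤q ThinN where
  obj n := n
  map _ := ⟨⟩

/-- The induced functor from the graph groupoid of `T₁` to the thin groupoid. -/
noncomputable def Fdown : Quiver.FreeGroupoid OneTree ⥤ ThinN := Quiver.FreeGroupoid.lift phi

/-- The generating edge from `n` to `n + 1`. -/
def step (n : ℕ) : vtx n ⟶ vtx (n + 1) := ⟨rfl⟩

/-- The canonical path from 0 to n in the graph groupoid. -/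
def canon : ∀ n : ℕ, ((Quiver.FreeGroupoid.of OneTree).obj (vtx 0) ⟶
    (Quiver.FreeGroupoid.of OneTree).obj (vtx n))
  | 0 => 𝟙 _
  | n+1 => canon n ≫ (Quiver.FreeGroupoid.of OneTree).map (step n)

/-- The functor from the thin groupoid back to the graph groupoid, sending the unique
morphism `m ⟶ n` to the canonical reduced path from `m` to `n` through `0`. -/
def toN (n : ThinN) : ℕ := n

def Gup : ThinN ⥤ Quiver.FreeGroupoid OneTree where
  obj n := (Quiver.FreeGroupoid.of OneTree).obj (vtx (toN n))
  map {m n} _ := Groupoid.inv (canon (toN m)) ≫ canon (toN n)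
  map_id n := by simp [Groupoid.inv_comp]
  map_comp {m n k} _ _ := by
    rw [Category.assoc, ← Category.assoc (canon (toN n)), Groupoid.comp_inv, Category.id_comp]

theorem key (m n : ℕ) (h : n = m + 1) :
    Groupoid.inv (canon m) ≫ canon n = (Quiver.FreeGroupoid.of OneTree).map (⟨h⟩ : vtx m ⟶ vtx n) := by
  subst h
  rw [show canon (m + 1) = canon m ≫ (Quiver.FreeGroupoid.of OneTree).map (step m) from rfl,
    ← Category.assoc, Groupoid.inv_comp, Category.id_comp]
  rfl

theorem comp_eq_id : Fdown ⋙ Gup = 𝟭 (Quiver.FreeGroupoid OneTree) := by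
  have h1 : 𝟭 (Quiver.FreeGroupoid OneTree) = Quiver.FreeGroupoid.lift (Quiver.FreeGroupoid.of OneTree) := by
    apply lift_unique; rfl
  have h2 : Quiver.FreeGroupoid.of OneTree ⋙q (Fdown ⋙ Gup).toPrefunctor = Quiver.FreeGroupoid.of OneTree := by
    have hF : Quiver.FreeGroupoid.of OneTree ⋙q Fdown.toPrefunctor = phi := lift_spec phi
    rw [show (Fdown ⋙ Gup).toPrefunctor = Fdown.toPrefunctor ⋙q Gup.toPrefunctor from rfl,
      ← Prefunctor.comp_assoc, hF]
    fapply Prefunctor.ext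
    · intro n; rfl
    · intro m n a
      obtain ⟨h⟩ := a
      exact key m n h
  rw [h1]
  exact lift_unique _ _ h2

/-- In the graph groupoid of the 1-regular tree `T₁` — i.e. the free
groupoid on the quiver `ℕ` with one arrow `m ⟶ m + 1` for each `m`, built from reduced
finite paths in the shadowed graph — any two parallel morphisms are equal: each hom-set
is a subsingleton.  Equivalently, every element of the graph groupoid connecting a
vertex `i` to a vertex `j` is the unique reduced finite path between them, so the
reduced finite path set of the shadowed graph of `T₁` is the disjoint union of the
finite path set of `T₁` and that of its shadow `T₁⁻¹`. -/
theorem oneTree_freeGroupoid_hom_subsingleton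
    (i j : Quiver.FreeGroupoid OneTree) : Subsingleton (i ⟶ j) := by
  constructor
  intro g h
  have hg := Functor.congr_hom comp_eq_id g
  have hh := Functor.congr_hom comp_eq_id h
  simp only [Functor.id_map] at hg hh
  have : (Fdown ⋙ Gup).map g = (Fdown ⋙ Gup).map h := by
    show Gup.map (Fdown.map g) = Gup.map (Fdown.map h)
    congr 1
  rw [hg, hh] at this
  simpa [cancel_epi, cancel_mono] using this
end
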